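/- arXiv:1809.00271 — 2 statements merged into one kernel-verified Lean document; each statement's English description precedes it below -/
import Mathlib

section
/- For every d ≥ 1 the following recursion holds in ℚ[u,τ]: ∂ᵤ([t^{d+1}]S^{d+1}/(d+1)!) = [tᵈ]Sᵈ/d! + (τ/d)·∂ᵤ([tᵈ]Sᵈ/d!). -/
open scoped BigOperators

noncomputable section

/-- `Q2 = ℚ[u, τ]`, realized with outer variable `u` and inner variable `τ`. -/
abbrev Q2 : Type := Polynomial (Polynomial ℚ)

/-- the variable `u` -/
def uQ : Q2 := Polynomial.X

/-- the variable `τ` -/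
def tauQ : Q2 := Polynomial.C Polynomial.X

/-- `log F = Σ_{k≥1} (−1)^{k+1}(F−1)ᵏ/k` for a power series `F` with constant term 1
(the coefficient of `tᴺ` only receives contributions from `k ≤ N` since `F − 1` has
positive `t`-order). -/
def logPS (F : PowerSeries Q2) : PowerSeries Q2 :=
  PowerSeries.mk fun N => ∑ k ∈ Finset.Icc 1 N,
    ((-1 : ℚ) ^ (k + 1) / (k : ℚ)) • PowerSeries.coeff (R := Q2) N ((F - 1) ^ k)

/-- `S` is the symbol of the dispersionless ILW Lax operator: the power series in `t`
with constant term 1 satisfying `S = 1 + t·(u + τ·log S)`. -/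
def IsILWSymbol (S : PowerSeries Q2) : Prop :=
  PowerSeries.constantCoeff (R := Q2) S = 1 ∧
  S = 1 + PowerSeries.X * (PowerSeries.C (R := Q2) uQ + PowerSeries.C (R := Q2) tauQ * logPS S)
/-- `∂ᵤ` acting coefficientwise on `ℚ[u,τ][[t]]` as `d/du` -/
def dU (F : PowerSeries Q2) : PowerSeries Q2 :=
  PowerSeries.mk fun N => Polynomial.derivative (PowerSeries.coeff (R := Q2) N F)

namespace ILWAux

open PowerSeries

lemma coeff_dU (F : PowerSeries Q2) (N : ℕ) :
    coeff (R := Q2) N (dU F) = Polynomial.derivative (coeff (R := Q2) N F) := coeff_mk _ _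

lemma dU_add (F G : PowerSeries Q2) : dU (F + G) = dU F + dU G := by
  ext N; simp [coeff_dU]

lemma dU_mul (F G : PowerSeries Q2) : dU (F * G) = dU F * G + F * dU G := by
  ext N
  simp only [coeff_dU, PowerSeries.coeff_mul, map_add, map_sum, Polynomial.derivative_mul]
  rw [Finset.sum_add_distrib]

lemma dU_one : dU (1 : PowerSeries Q2) = 0 := by
  ext N
  simp [coeff_dU, PowerSeries.coeff_one, apply_ite (Polynomial.derivative (R := Polynomial ℚ))]

lemma dU_X : dU (PowerSeries.X : PowerSeries Q2) = 0 := by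
  ext N
  simp [coeff_dU, PowerSeries.coeff_X, apply_ite (Polynomial.derivative (R := Polynomial ℚ))]

lemma dU_C (a : Q2) : dU (PowerSeries.C (R := Q2) a) = PowerSeries.C (R := Q2) (Polynomial.derivative a) := by
  ext N
  simp [coeff_dU, PowerSeries.coeff_C, apply_ite (Polynomial.derivative (R := Polynomial ℚ))]

lemma dU_pow (F : PowerSeries Q2) (n : ℕ) :
    dU (F ^ (n + 1)) = (n + 1) • (F ^ n * dU F) := by
  induction n with
  | zero => simp [dU_mul]
  | succ n ih =>
      rw [pow_succ, dU_mul, ih]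
      rw [smul_mul_assoc, show F ^ n * dU F * F = F ^ (n + 1) * dU F by ring, succ_nsmul]
      rw [succ_nsmul, succ_nsmul]


lemma dU_sub_one (S : PowerSeries Q2) : dU (S - 1) = dU S := by
  ext N
  simp [coeff_dU, PowerSeries.coeff_one, apply_ite (Polynomial.derivative (R := Polynomial ℚ))]

lemma key_log (S : PowerSeries Q2) (h1 : constantCoeff (R := Q2) S = 1) :
    S * dU (logPS S) = dU S := by
  set W : PowerSeries Q2 := S - 1 with hWdef
  have hW0 : constantCoeff (R := Q2) W = 0 := by simp [hWdef, h1]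
  have hXW : (PowerSeries.X : PowerSeries Q2) ∣ W := PowerSeries.X_dvd_iff.mpr hW0
  have hXdU : (PowerSeries.X : PowerSeries Q2) ∣ dU W := by
    refine PowerSeries.X_dvd_iff.mpr ?_
    rw [← PowerSeries.coeff_zero_eq_constantCoeff_apply, coeff_dU,
      PowerSeries.coeff_zero_eq_constantCoeff_apply, hW0]
    simp
  have hvanish : ∀ N j : ℕ, N ≤ j → coeff (R := Q2) N (W ^ j * dU W) = 0 := by
    intro N j h
    have hdvd : (PowerSeries.X : PowerSeries Q2) ^ (j + 1) ∣ W ^ j * dU W := by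
      rw [pow_succ]
      exact mul_dvd_mul (pow_dvd_pow_of_dvd hXW j) hXdU
    exact PowerSeries.X_pow_dvd_iff.mp hdvd N (by omega)
  set M : ℕ → PowerSeries Q2 :=
    fun K => ∑ j ∈ Finset.range K, ((-1 : ℚ) ^ j) • (W ^ j * dU W) with hM
  have htel : ∀ K, (1 + W) * M K = dU W - ((-1 : ℚ) ^ K) • (W ^ K * dU W) := by
    intro K
    induction K with
    | zero => simp [hM]
    | succ K ih =>
        have hstep : M (K + 1) = M K + ((-1 : ℚ) ^ K) • (W ^ K * dU W) :=
          Finset.sum_range_succ _ K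
        rw [hstep, mul_add, ih, mul_smul_comm]
        have hexp : (1 + W) * (W ^ K * dU W) = W ^ K * dU W + W ^ (K + 1) * dU W := by ring
        rw [hexp, smul_add, pow_succ ((-1 : ℚ)) K]
        simp only [mul_neg_one, neg_smul]
        abel
  have hdUpow' : ∀ k : ℕ, 1 ≤ k → dU (W ^ k) = k • (W ^ (k - 1) * dU W) := by
    intro k hk
    obtain ⟨n, rfl⟩ : ∃ n, k = n + 1 := ⟨k - 1, by omega⟩
    simpa using dU_pow W n
  have hcoeff : ∀ N K : ℕ, N ≤ K →
      coeff (R := Q2) N (dU (logPS S)) = coeff (R := Q2) N (M K) := by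
    intro N K hNK
    have hL : coeff (R := Q2) N (dU (logPS S)) =
        ∑ k ∈ Finset.Icc 1 N,
          ((-1 : ℚ) ^ (k + 1) / (k : ℚ)) • Polynomial.derivative (coeff (R := Q2) N (W ^ k)) := by
      rw [coeff_dU, logPS, PowerSeries.coeff_mk, map_sum]
      refine Finset.sum_congr rfl fun k _ => ?_
      rw [Polynomial.derivative_smul]
    have hterm : ∀ k ∈ Finset.Icc 1 N,
        ((-1 : ℚ) ^ (k + 1) / (k : ℚ)) • Polynomial.derivative (coeff (R := Q2) N (W ^ k))
          = ((-1 : ℚ) ^ (k + 1)) • coeff (R := Q2) N (W ^ (k - 1) * dU W) := by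
      intro k hk
      have hk1 : 1 ≤ k := (Finset.mem_Icc.mp hk).1
      rw [← coeff_dU, hdUpow' k hk1, map_nsmul]
      rw [← Nat.cast_smul_eq_nsmul ℚ, smul_smul]
      congr 1
      field_simp
    rw [hL, Finset.sum_congr rfl hterm]
    have hreindex : ∑ k ∈ Finset.Icc 1 N,
        ((-1 : ℚ) ^ (k + 1)) • coeff (R := Q2) N (W ^ (k - 1) * dU W)
        = ∑ j ∈ Finset.range N, ((-1 : ℚ) ^ j) • coeff (R := Q2) N (W ^ j * dU W) := by
      rw [← Finset.Ico_add_one_right_eq_Icc, Finset.sum_Ico_eq_sum_range]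
      refine Finset.sum_congr (by norm_num) fun j _ => ?_
      have h1 : 1 + j - 1 = j := by omega
      have h2 : ((-1 : ℚ)) ^ (1 + j + 1) = (-1) ^ j := by
        rw [show 1 + j + 1 = j + 2 by omega, pow_succ, pow_succ]
        ring
      rw [h1, h2]
    have hMK : coeff (R := Q2) N (M K) =
        ∑ j ∈ Finset.range K, ((-1 : ℚ) ^ j) • coeff (R := Q2) N (W ^ j * dU W) := by
      rw [hM, map_sum]
      exact Finset.sum_congr rfl fun j _ => (coeff (R := Q2) N).map_smul_of_tower _ _
    rw [hreindex, hMK]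
    refine Finset.sum_subset (Finset.range_subset_range.mpr hNK) fun j _ hj => ?_
    rw [hvanish N j (Nat.le_of_not_lt fun h => hj (Finset.mem_range.mpr h)), smul_zero]
  ext N
  have hcongr : coeff (R := Q2) N (S * dU (logPS S)) = coeff (R := Q2) N (S * M N) := by
    rw [PowerSeries.coeff_mul, PowerSeries.coeff_mul]
    refine Finset.sum_congr rfl fun p hp => ?_
    have hp2 : p.2 ≤ N := by
      have := Finset.HasAntidiagonal.mem_antidiagonal.mp hp
      omega
    rw [hcoeff p.2 N hp2]
  have hS1 : S = 1 + W := by rw [hWdef]; ring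
  rw [hcongr, show S * M N = (1 + W) * M N by rw [← hS1], htel N, map_sub, (coeff (R := Q2) N).map_smul_of_tower,
    hvanish N N le_rfl, smul_zero, sub_zero, hWdef, dU_sub_one]


lemma dU_ilw (S : PowerSeries Q2) (hS : IsILWSymbol S) :
    dU S = PowerSeries.X * (1 + PowerSeries.C (R := Q2) tauQ * dU (logPS S)) := by
  conv_lhs => rw [hS.2]
  rw [dU_add, dU_one, dU_mul, dU_X, dU_add, dU_mul, dU_C, dU_C]
  simp [uQ, tauQ]

lemma key_rel (S : PowerSeries Q2) (hS : IsILWSymbol S) :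
    S * dU S = PowerSeries.X * S + PowerSeries.X * PowerSeries.C (R := Q2) tauQ * dU S := by
  have h3 := key_log S hS.1
  calc S * dU S
      = PowerSeries.X * S + PowerSeries.X * PowerSeries.C (R := Q2) tauQ * (S * dU (logPS S)) := by
        rw [dU_ilw S hS]; ring
    _ = PowerSeries.X * S + PowerSeries.X * PowerSeries.C (R := Q2) tauQ * dU S := by rw [h3]

end ILWAux

open ILWAux PowerSeries

/-- For every `d ≥ 1` the recursion holds in `ℚ[u,τ]`:
`∂ᵤ([t^{d+1}]S^{d+1}/(d+1)!) = [tᵈ]Sᵈ/d! + (τ/d)·∂ᵤ([tᵈ]Sᵈ/d!)`. -/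
theorem ilw_stmt12 (S : PowerSeries Q2) (hS : IsILWSymbol S) (d : ℕ) (hd : 1 ≤ d) :
    Polynomial.derivative
        ((Nat.factorial (d + 1) : ℚ)⁻¹ • PowerSeries.coeff (R := Q2) (d + 1) (S ^ (d + 1)))
      = (Nat.factorial d : ℚ)⁻¹ • PowerSeries.coeff (R := Q2) d (S ^ d)
        + (d : ℚ)⁻¹ • (tauQ *
            Polynomial.derivative
              ((Nat.factorial d : ℚ)⁻¹ • PowerSeries.coeff (R := Q2) d (S ^ d))) := by
  obtain ⟨e, rfl⟩ : ∃ e, d = e + 1 := ⟨d - 1, by omega⟩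
  set A : Q2 := coeff (R := Q2) (e + 1) (S ^ (e + 1)) with hA
  set D : Q2 := Polynomial.derivative A with hDdef
  have he1 : ((e : ℚ) + 1) ≠ 0 := by positivity
  -- derivative of coeff d of S^d
  have hD : D = (e + 1) • coeff (R := Q2) (e + 1) (S ^ e * dU S) := by
    rw [hDdef, hA, ← coeff_dU, dU_pow S e, map_nsmul]
  have hcoeffLow : coeff (R := Q2) (e + 1) (S ^ e * dU S) = ((e : ℚ) + 1)⁻¹ • D := by
    rw [hD, ← Nat.cast_smul_eq_nsmul ℚ, smul_smul]
    rw [show ((e : ℚ) + 1)⁻¹ * (↑(e + 1)) = 1 by push_cast; field_simp]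
    rw [one_smul]
  -- the key expansion of S^{d} * dU S
  have h3 : S ^ (e + 1) * dU S
      = PowerSeries.X * S ^ (e + 1)
        + PowerSeries.X * (PowerSeries.C (R := Q2) tauQ * (S ^ e * dU S)) := by
    calc S ^ (e + 1) * dU S = S ^ e * (S * dU S) := by ring
      _ = S ^ e * (PowerSeries.X * S + PowerSeries.X * PowerSeries.C (R := Q2) tauQ * dU S) := by
          rw [key_rel S hS]
      _ = _ := by ring
  have hTop : Polynomial.derivative (coeff (R := Q2) (e + 1 + 1) (S ^ (e + 1 + 1)))
      = (e + 2 : ℚ) • A + ((e + 2 : ℚ) * ((e : ℚ) + 1)⁻¹) • (tauQ * D) := by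
    rw [← coeff_dU, dU_pow S (e + 1), map_nsmul, h3, map_add,
      PowerSeries.coeff_succ_X_mul, PowerSeries.coeff_succ_X_mul,
      PowerSeries.coeff_C_mul, hcoeffLow, ← hA]
    rw [← Nat.cast_smul_eq_nsmul ℚ, mul_smul_comm, smul_add, smul_smul]
    push_cast
    ring_nf
  have hfact1 : ((e + 1).factorial : ℚ) ≠ 0 := Nat.cast_ne_zero.mpr (Nat.factorial_ne_zero _)
  rw [Polynomial.derivative_smul, hTop, Polynomial.derivative_smul, ← hDdef,
    mul_smul_comm, smul_add, smul_smul, smul_smul, smul_smul]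
  have hfs : ((e + 1 + 1).factorial : ℚ) = ((e : ℚ) + 2) * ((e + 1).factorial : ℚ) := by
    rw [Nat.factorial_succ (e + 1)]
    push_cast
    ring
  congr 1
  · congr 1
    rw [hfs]
    field_simp
  · congr 1
    rw [hfs]
    field_simp
    push_cast
    ring
end
end

section
/- For every d ≥ 0 the closed formula holds in ℚ[u,τ]: [t^{d+1}]S^{d+1}/(d+1)! = Σ_{j=0}^{d} P_{d+1,j+1} τ^{d−j} u^{j+1}/(j+1)!. -/
open scoped BigOperators

noncomputable section

/-- the polynomial `P_d(y) = y·∏_{i=1}^{d−1}(y + τ/i) ∈ ℚ[y,τ]`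
(outer variable `y`, inner variable `τ`) -/
def Ppoly (d : ℕ) : Polynomial (Polynomial ℚ) :=
  Polynomial.X * ∏ i ∈ Finset.Icc 1 (d - 1),
    (Polynomial.X + Polynomial.C ((i : ℚ)⁻¹ • (Polynomial.X : Polynomial ℚ)))

/-- the rational numbers `P_{d,j}` defined by `P_d(y) = Σ_{j=1}^d P_{d,j} yʲ τ^{d−j}` -/
def Pcoef (d j : ℕ) : ℚ := ((Ppoly d).coeff j).coeff (d - j)

namespace ILWAux

/-! ### The coefficientwise derivative `∂/∂u` on `PowerSeries Q2` -/

/-- coefficientwise `∂/∂u` on power series over `Q2` -/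
def Du (F : PowerSeries Q2) : PowerSeries Q2 :=
  PowerSeries.mk fun n => Polynomial.derivative (PowerSeries.coeff (R := Q2) n F)

@[simp] lemma coeff_Du (F : PowerSeries Q2) (n : ℕ) :
    PowerSeries.coeff (R := Q2) n (Du F) = Polynomial.derivative (PowerSeries.coeff (R := Q2) n F) := by
  simp [Du]

lemma Du_mul (F G : PowerSeries Q2) : Du (F * G) = Du F * G + F * Du G := by
  apply PowerSeries.ext; intro n
  simp only [coeff_Du, PowerSeries.coeff_mul, map_add, map_sum, Polynomial.derivative_mul,
    Finset.sum_add_distrib]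

@[simp] lemma Du_one : Du (1 : PowerSeries Q2) = 0 := by
  apply PowerSeries.ext; intro n
  rcases n with _ | n <;> simp [PowerSeries.coeff_one]

lemma Du_add (F G : PowerSeries Q2) : Du (F + G) = Du F + Du G := by
  apply PowerSeries.ext; intro n
  simp

@[simp] lemma Du_X : Du (PowerSeries.X : PowerSeries Q2) = 0 := by
  apply PowerSeries.ext; intro n
  simp only [coeff_Du, PowerSeries.coeff_X, map_zero]
  split <;> simp

@[simp] lemma Du_C (p : Q2) :
    Du (PowerSeries.C (R := Q2) p) = PowerSeries.C (R := Q2) (Polynomial.derivative p) := by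
  apply PowerSeries.ext; intro n
  simp only [coeff_Du, PowerSeries.coeff_C]
  split <;> simp

lemma Du_pow (F : PowerSeries Q2) (k : ℕ) :
    Du (F ^ (k + 1)) = (k + 1) • (F ^ k * Du F) := by
  induction k with
  | zero => simp
  | succ k ih =>
      rw [pow_succ, Du_mul, ih, pow_succ, smul_mul_assoc]
      have h : F ^ k * Du F * F = F ^ k * F * Du F := by ring
      rw [h]
      exact (succ_nsmul (F ^ k * F * Du F) (k + 1)).symm

lemma coeff_pow_eq_zero {F : PowerSeries Q2} (h : PowerSeries.constantCoeff (R := Q2) F = 0)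
    {k m : ℕ} (hm : m < k) : PowerSeries.coeff (R := Q2) m (F ^ k) = 0 := by
  have h1 : (PowerSeries.X : PowerSeries Q2) ∣ F := PowerSeries.X_dvd_iff.2 h
  have h2 : (PowerSeries.X : PowerSeries Q2) ^ k ∣ F ^ k := pow_dvd_pow_of_dvd h1 k
  exact PowerSeries.X_pow_dvd_iff.1 h2 m hm

lemma coeff_mul_eq_zero {A B : PowerSeries Q2} {r m : ℕ}
    (h1 : ∀ j < r, PowerSeries.coeff (R := Q2) j A = 0)
    (h2 : PowerSeries.coeff (R := Q2) 0 B = 0) (hm : m ≤ r) :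
    PowerSeries.coeff (R := Q2) m (A * B) = 0 := by
  rw [PowerSeries.coeff_mul]
  apply Finset.sum_eq_zero
  rintro ⟨a, b⟩ hab
  rw [Finset.HasAntidiagonal.mem_antidiagonal] at hab
  rcases lt_or_ge a r with ha | ha
  · rw [h1 a ha, zero_mul]
  · have : b = 0 := by omega
    subst this
    rw [h2, mul_zero]

/-! ### The logarithmic derivative identity `F · ∂ᵤ(log F) = ∂ᵤF` -/

lemma coeff_logPS (F : PowerSeries Q2) (N : ℕ) :
    PowerSeries.coeff (R := Q2) N (logPS F) = ∑ k ∈ Finset.Icc 1 N,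
      ((-1 : ℚ) ^ (k + 1) / (k : ℚ)) • PowerSeries.coeff (R := Q2) N ((F - 1) ^ k) := by
  simp [logPS]

lemma Du_sub_one (F : PowerSeries Q2) : Du (F - 1) = Du F := by
  apply PowerSeries.ext; intro n
  simp only [coeff_Du, map_sub]
  rcases n with _ | n <;> simp [PowerSeries.coeff_one]

lemma q_pow_neg_one_smul {A : Type} [Ring A] [Module ℚ A] (j : ℕ) (x : A) :
    ((-1 : ℚ) ^ j) • x = (-1 : A) ^ j * x := by
  rcases Nat.even_or_odd j with h | h
  · simp [h.neg_one_pow]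
  · simp [h.neg_one_pow]

lemma mul_Du_logPS {F : PowerSeries Q2} (hF : PowerSeries.constantCoeff (R := Q2) F = 1) :
    F * Du (logPS F) = Du F := by
  have hF0 : PowerSeries.constantCoeff (R := Q2) (1 - F) = 0 := by
    simp [hF]
  have hDu0 : PowerSeries.coeff (R := Q2) 0 (Du F) = 0 := by
    rw [coeff_Du, ← PowerSeries.coeff_zero_eq_constantCoeff_apply] at *
    rw [hF]
    simp
  apply PowerSeries.ext; intro N
  set G : PowerSeries Q2 := ∑ j ∈ Finset.range N, (1 - F) ^ j * Du F with hG
  have step1 : ∀ b ≤ N, PowerSeries.coeff (R := Q2) b (Du (logPS F)) = PowerSeries.coeff (R := Q2) b G := by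
    intro b hb
    rw [coeff_Du, coeff_logPS, map_sum]
    have key : ∀ k ∈ Finset.Icc 1 b,
        Polynomial.derivative (((-1 : ℚ) ^ (k + 1) / (k : ℚ)) •
          PowerSeries.coeff (R := Q2) b ((F - 1) ^ k))
        = PowerSeries.coeff (R := Q2) b ((1 - F) ^ (k - 1) * Du F) := by
      intro k hk
      rw [Finset.mem_Icc] at hk
      obtain ⟨j, rfl⟩ : ∃ j, k = j + 1 := ⟨k - 1, by omega⟩
      rw [Polynomial.derivative_smul]
      have h1 : Polynomial.derivative (PowerSeries.coeff (R := Q2) b ((F - 1) ^ (j + 1)))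
          = PowerSeries.coeff (R := Q2) b (Du ((F - 1) ^ (j + 1))) := (coeff_Du _ _).symm
      rw [h1, Du_pow, Du_sub_one, map_nsmul]
      rw [← Nat.cast_smul_eq_nsmul ℚ, smul_smul]
      have h2 : (-1 : ℚ) ^ (j + 1 + 1) / ((j + 1 : ℕ) : ℚ) * ((j + 1 : ℕ) : ℚ)
          = (-1 : ℚ) ^ j := by
        have hj : ((j + 1 : ℕ) : ℚ) ≠ 0 := by positivity
        field_simp
        ring
      rw [h2]
      have h3 : ((1 - F) ^ (j + 1 - 1) * Du F) = ((-1 : ℚ) ^ j) • ((F - 1) ^ j * Du F) := by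
        have h4 : (1 - F) = (-1 : PowerSeries Q2) * (F - 1) := by ring
        rw [Nat.add_sub_cancel, h4, mul_pow, mul_assoc, ← q_pow_neg_one_smul]
      rw [h3]
      rfl
    rw [Finset.sum_congr rfl key]
    rw [hG, map_sum]
    rw [← Finset.Ico_add_one_right_eq_Icc, Finset.sum_Ico_eq_sum_range]
    have hb' : b + 1 - 1 = b := by omega
    rw [hb']
    simp only [Nat.add_sub_cancel_left]
    apply Finset.sum_subset (Finset.range_subset_range.mpr hb)
    intro i _ hi
    rw [Finset.mem_range, not_lt] at hi
    exact coeff_mul_eq_zero (fun j hj => coeff_pow_eq_zero hF0 hj) hDu0 hi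
  have step2 : PowerSeries.coeff (R := Q2) N (F * Du (logPS F)) = PowerSeries.coeff (R := Q2) N (F * G) := by
    rw [PowerSeries.coeff_mul, PowerSeries.coeff_mul]
    apply Finset.sum_congr rfl
    rintro ⟨a, b⟩ hab
    rw [Finset.HasAntidiagonal.mem_antidiagonal] at hab
    rw [step1 b (by omega)]
  have hFG : F * G = Du F - (1 - F) ^ N * Du F := by
    have hgeom : (∑ j ∈ Finset.range N, (1 - F) ^ j) * F = 1 - (1 - F) ^ N := by
      have h := geom_sum_mul (1 - F) N
      linear_combination -h
    calc F * G = ((∑ j ∈ Finset.range N, (1 - F) ^ j) * F) * Du F := by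
          rw [hG, ← Finset.sum_mul]; ring
      _ = (1 - (1 - F) ^ N) * Du F := by rw [hgeom]
      _ = Du F - (1 - F) ^ N * Du F := by ring
  rw [step2, hFG, map_sub,
    coeff_mul_eq_zero (fun j hj => coeff_pow_eq_zero hF0 hj) hDu0 (le_refl N), sub_zero]

/-! ### Setting the variable `u` to zero -/

/-- evaluation of the outer variable `u` at `0`, as a ring endomorphism of `Q2` -/
def eta : Q2 →+* Q2 :=
  (Polynomial.C : Polynomial ℚ →+* Q2).comp (Polynomial.evalRingHom (0 : Polynomial ℚ))

lemma eta_apply (p : Q2) : eta p = Polynomial.C (Polynomial.eval 0 p) := rfl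

lemma eta_coeff_zero (p : Q2) : eta p = Polynomial.C (p.coeff 0) := by
  rw [eta_apply, Polynomial.coeff_zero_eq_eval_zero]

@[simp] lemma eta_uQ : eta uQ = 0 := by
  rw [eta_apply]; simp [uQ]

lemma eta_smul (q : ℚ) (p : Q2) : eta (q • p) = q • eta p := by
  rw [eta_apply, eta_apply, Polynomial.eval_smul, Polynomial.smul_C]

lemma map_eta_logPS (F : PowerSeries Q2) :
    PowerSeries.map eta (logPS F) = logPS (PowerSeries.map eta F) := by
  apply PowerSeries.ext
  intro N
  rw [PowerSeries.coeff_map]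
  simp only [logPS, PowerSeries.coeff_mk]
  rw [map_sum]
  apply Finset.sum_congr rfl
  intro k _
  rw [eta_smul]
  congr 1
  rw [← PowerSeries.coeff_map, map_pow, map_sub, map_one]

lemma mapS_eq_one {S : PowerSeries Q2} (hS : IsILWSymbol S) :
    PowerSeries.map eta S = 1 := by
  set T := PowerSeries.map eta S with hT
  have hTeq : T = 1 + PowerSeries.X * (PowerSeries.C (R := Q2) (eta tauQ) * logPS T) := by
    conv_lhs => rw [hT, hS.2]
    rw [map_add, map_one, map_mul, PowerSeries.map_X, map_add, map_mul,
      PowerSeries.map_C, PowerSeries.map_C, eta_uQ, map_eta_logPS, ← hT]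
    rw [map_zero, zero_add]
  have key : ∀ n, PowerSeries.coeff (R := Q2) n T = PowerSeries.coeff (R := Q2) n 1 := by
    intro n
    induction n using Nat.strong_induction_on with
    | _ n ih =>
      rcases n with _ | m
      · simp [hT, PowerSeries.coeff_map, PowerSeries.coeff_zero_eq_constantCoeff_apply, hS.1]
      · rw [hTeq]
        rw [map_add, PowerSeries.coeff_one]
        simp only [Nat.succ_ne_zero, if_false, zero_add]
        rw [PowerSeries.coeff_succ_X_mul, PowerSeries.coeff_C_mul]
        have hlog : PowerSeries.coeff (R := Q2) m (logPS T) = 0 := by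
          simp only [logPS, PowerSeries.coeff_mk]
          apply Finset.sum_eq_zero
          intro k hk
          rw [Finset.mem_Icc] at hk
          obtain ⟨j, rfl⟩ : ∃ j, k = j + 1 := ⟨k - 1, by omega⟩
          have hcoeff : PowerSeries.coeff (R := Q2) m ((T - 1) ^ (j + 1)) = 0 := by
            have hsplit : (T - 1) ^ (j + 1) = (T - 1) * (T - 1) ^ j := by ring
            rw [hsplit, PowerSeries.coeff_mul]
            apply Finset.sum_eq_zero
            rintro ⟨a, b⟩ hab
            rw [Finset.HasAntidiagonal.mem_antidiagonal] at hab
            have ha : PowerSeries.coeff (R := Q2) a (T - 1) = 0 := by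
              rw [map_sub, ih a (by omega), sub_self]
            rw [ha, zero_mul]
          rw [hcoeff, smul_zero]
        rw [hlog, mul_zero]
  exact PowerSeries.ext key

/-! ### Recursion for `Ppoly`/`Pcoef` -/

lemma Ppoly_succ (n : ℕ) (hn : 1 ≤ n) :
    Ppoly (n + 1) = Ppoly n *
      (Polynomial.X + Polynomial.C ((n : ℚ)⁻¹ • (Polynomial.X : Polynomial ℚ))) := by
  obtain ⟨m, rfl⟩ : ∃ m, n = m + 1 := ⟨n - 1, by omega⟩
  show Ppoly (m + 2) = _
  have h1 : m + 2 - 1 = m + 1 := by omega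
  have h2 : m + 1 - 1 = m := by omega
  rw [Ppoly, Ppoly, h1, h2, Finset.prod_Icc_succ_top (by omega), mul_assoc]

lemma Ppoly_natDegree_le (n : ℕ) (hn : 1 ≤ n) : (Ppoly n).natDegree ≤ n := by
  rw [Ppoly]
  refine le_trans (Polynomial.natDegree_mul_le) ?_
  have h1 : (Polynomial.X : Polynomial (Polynomial ℚ)).natDegree = 1 := Polynomial.natDegree_X
  rw [h1]
  have h2 : (∏ i ∈ Finset.Icc 1 (n - 1),
      (Polynomial.X + Polynomial.C ((i : ℚ)⁻¹ • (Polynomial.X : Polynomial ℚ)))).natDegree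
      ≤ n - 1 := by
    refine le_trans (Polynomial.natDegree_prod_le _ _) ?_
    have : ∀ i ∈ Finset.Icc 1 (n - 1),
        (Polynomial.X + Polynomial.C ((i : ℚ)⁻¹ • (Polynomial.X : Polynomial ℚ))).natDegree = 1 :=
      fun i _ => Polynomial.natDegree_X_add_C _
    rw [Finset.sum_congr rfl this, Finset.sum_const, Nat.card_Icc, smul_eq_mul, mul_one]
    omega
  omega

lemma Ppoly_coeff_eq_zero {n k : ℕ} (hn : 1 ≤ n) (h : n < k) : (Ppoly n).coeff k = 0 :=
  Polynomial.coeff_eq_zero_of_natDegree_lt (lt_of_le_of_lt (Ppoly_natDegree_le n hn) h)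

lemma Pcoef_zero (d : ℕ) : Pcoef d 0 = 0 := by
  rw [Pcoef, Ppoly, Polynomial.mul_coeff_zero, Polynomial.coeff_X_zero, zero_mul,
    Polynomial.coeff_zero]

lemma Pcoef_high {n k : ℕ} (hn : 1 ≤ n) (h : n < k) : Pcoef n k = 0 := by
  rw [Pcoef, Ppoly_coeff_eq_zero hn h, Polynomial.coeff_zero]

lemma Pcoef_rec (d i : ℕ) (hi : i ≤ d + 1) :
    ((d : ℚ) + 1) * Pcoef (d + 2) (i + 1)
      = ((d : ℚ) + 1) * Pcoef (d + 1) i + Pcoef (d + 1) (i + 1) := by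
  have hd1 : ((d : ℚ) + 1) ≠ 0 := by positivity
  have hrw : Ppoly (d + 2) = Ppoly (d + 1) *
      (Polynomial.X + Polynomial.C (((d + 1 : ℕ) : ℚ)⁻¹ • (Polynomial.X : Polynomial ℚ))) :=
    Ppoly_succ (d + 1) (by omega)
  have hcoeff : (Ppoly (d + 2)).coeff (i + 1)
      = (Ppoly (d + 1)).coeff i
        + (Ppoly (d + 1)).coeff (i + 1) * (((d + 1 : ℕ) : ℚ)⁻¹ • (Polynomial.X : Polynomial ℚ)) := by
    rw [hrw, mul_add, Polynomial.coeff_add, Polynomial.coeff_mul_X, Polynomial.coeff_mul_C]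
  rcases Nat.lt_or_ge i (d + 1) with hlt | hge
  · have e1 : d + 2 - (i + 1) = (d - i) + 1 := by omega
    have e2 : d + 1 - i = (d - i) + 1 := by omega
    have e3 : d + 1 - (i + 1) = d - i := by omega
    rw [Pcoef, Pcoef, Pcoef, hcoeff, e1, e2, e3, Polynomial.coeff_add]
    have h5 : ((Ppoly (d + 1)).coeff (i + 1) *
          ((d + 1 : ℕ) : ℚ)⁻¹ • (Polynomial.X : Polynomial ℚ)).coeff (d - i + 1)
        = (((d + 1 : ℕ) : ℚ))⁻¹ * ((Ppoly (d + 1)).coeff (i + 1)).coeff (d - i) := by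
      rw [mul_smul_comm, Polynomial.coeff_smul, Polynomial.coeff_mul_X, smul_eq_mul]
    rw [h5]
    push_cast
    field_simp
  · have hieq : i = d + 1 := by omega
    subst hieq
    have e1 : d + 2 - (d + 1 + 1) = 0 := by omega
    have e2 : d + 1 - (d + 1) = 0 := by omega
    rw [Pcoef, Pcoef, Pcoef, hcoeff, e1, e2, Polynomial.coeff_add]
    have h5 : ((Ppoly (d + 1)).coeff (d + 1 + 1) *
          ((d + 1 : ℕ) : ℚ)⁻¹ • (Polynomial.X : Polynomial ℚ)).coeff 0 = 0 := by
      rw [mul_smul_comm, Polynomial.coeff_smul, Polynomial.mul_coeff_zero,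
        Polynomial.coeff_X_zero, mul_zero, smul_zero]
    have h6 : ((Ppoly (d + 1)).coeff (d + 1 + 1)).coeff (d + 1 - (d + 1 + 1)) = 0 := by
      rw [Ppoly_coeff_eq_zero (by omega) (by omega), Polynomial.coeff_zero]
    rw [h5, h6, add_zero, add_zero]

/-! ### The `u`-derivative recursion for the diagonal coefficients of `S` -/

lemma Du_S {S : PowerSeries Q2} (hS : IsILWSymbol S) :
    Du S = PowerSeries.X * (1 + PowerSeries.C (R := Q2) tauQ * Du (logPS S)) := by
  conv_lhs => rw [hS.2]
  rw [Du_add, Du_one, zero_add, Du_mul, Du_X, zero_mul, zero_add, Du_add, Du_C, Du_mul, Du_C]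
  have h1 : Polynomial.derivative uQ = 1 := by
    simp [uQ]
  have h2 : Polynomial.derivative tauQ = 0 := by
    simp [tauQ]
  rw [h1, h2, map_zero, zero_mul, zero_add, map_one]

lemma hu {S : PowerSeries Q2} (hS : IsILWSymbol S) :
    S * Du S = PowerSeries.X * S + PowerSeries.C (R := Q2) tauQ * (PowerSeries.X * Du S) := by
  have h := Du_S hS
  calc S * Du S = PowerSeries.X * (S + PowerSeries.C (R := Q2) tauQ * (S * Du (logPS S))) := by
        rw [h]; ring
    _ = PowerSeries.X * (S + PowerSeries.C (R := Q2) tauQ * Du S) := by rw [mul_Du_logPS hS.1]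
    _ = PowerSeries.X * S + PowerSeries.C (R := Q2) tauQ * (PowerSeries.X * Du S) := by ring

/-- the diagonal coefficients `[t^{d+1}]S^{d+1}` -/
def Acoef (S : PowerSeries Q2) (d : ℕ) : Q2 := PowerSeries.coeff (R := Q2) (d + 1) (S ^ (d + 1))

lemma Arec {S : PowerSeries Q2} (hS : IsILWSymbol S) (d : ℕ) :
    ((d : ℚ) + 1) • Polynomial.derivative (Acoef S (d + 1))
      = ((d : ℚ) + 2) • (((d : ℚ) + 1) • Acoef S d + tauQ * Polynomial.derivative (Acoef S d)) := by
  set B : Q2 := PowerSeries.coeff (R := Q2) (d + 1) (S ^ d * Du S) with hB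
  have dA : Polynomial.derivative (Acoef S d) = ((d : ℕ) + 1) • B := by
    rw [Acoef, ← coeff_Du, Du_pow, map_nsmul, hB]
  have dA1 : Polynomial.derivative (Acoef S (d + 1))
      = ((d : ℕ) + 2) • PowerSeries.coeff (R := Q2) (d + 2) (S ^ (d + 1) * Du S) := by
    rw [Acoef, ← coeff_Du, Du_pow, map_nsmul]
  have hmulpow : S ^ (d + 1) * Du S
      = PowerSeries.X * S ^ (d + 1)
        + PowerSeries.C (R := Q2) tauQ * (PowerSeries.X * (S ^ d * Du S)) := by
    have h := hu hS
    calc S ^ (d + 1) * Du S = S ^ d * (S * Du S) := by ring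
      _ = S ^ d * (PowerSeries.X * S + PowerSeries.C (R := Q2) tauQ * (PowerSeries.X * Du S)) := by
          rw [h]
      _ = PowerSeries.X * S ^ (d + 1)
            + PowerSeries.C (R := Q2) tauQ * (PowerSeries.X * (S ^ d * Du S)) := by ring
  have hBsucc : PowerSeries.coeff (R := Q2) (d + 2) (S ^ (d + 1) * Du S) = Acoef S d + tauQ * B := by
    rw [hmulpow, map_add, PowerSeries.coeff_C_mul, PowerSeries.coeff_succ_X_mul,
      PowerSeries.coeff_succ_X_mul, hB, Acoef]
  rw [dA1, hBsucc, dA]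
  rw [← Nat.cast_smul_eq_nsmul ℚ, ← Nat.cast_smul_eq_nsmul ℚ]
  push_cast
  simp only [smul_add, smul_smul, mul_smul_comm]
  module

/-! ### The closed formula polynomials -/

/-- scalar coefficients of the closed formula -/
def ec (d j : ℕ) : ℚ := Pcoef (d + 1) j * ((Nat.factorial (d + 1) : ℚ) / (Nat.factorial j : ℚ))

/-- the closed-form polynomial, equal to `[t^{d+1}]S^{d+1}` -/
def Epoly (d : ℕ) : Q2 :=
  ∑ j ∈ Finset.range (d + 2), ec d j • (tauQ ^ (d + 1 - j) * uQ ^ j)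

lemma deriv_term (c : ℚ) (a j : ℕ) :
    Polynomial.derivative (c • (tauQ ^ a * uQ ^ j))
      = (c * j) • (tauQ ^ a * uQ ^ (j - 1)) := by
  rw [Polynomial.derivative_smul, Polynomial.derivative_mul]
  have h1 : Polynomial.derivative (tauQ ^ a) = 0 := by
    rw [tauQ, ← Polynomial.C_pow, Polynomial.derivative_C]
  rw [h1, zero_mul, zero_add, uQ, Polynomial.derivative_X_pow]
  have h2 : (Polynomial.C ((j : Polynomial ℚ)) : Q2) = ((j : ℕ) : Q2) := by
    simp
  rw [h2]
  have h3 : tauQ ^ a * (((j : ℕ) : Q2) * Polynomial.X ^ (j - 1))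
      = (j : ℕ) • (tauQ ^ a * Polynomial.X ^ (j - 1)) := by
    rw [nsmul_eq_mul]; ring
  rw [h3, ← Nat.cast_smul_eq_nsmul ℚ, smul_smul]

lemma dEpoly (d : ℕ) :
    Polynomial.derivative (Epoly d)
      = ∑ j ∈ Finset.range (d + 2), (ec d j * j) • (tauQ ^ (d + 1 - j) * uQ ^ (j - 1)) := by
  rw [Epoly, map_sum]
  exact Finset.sum_congr rfl fun j _ => deriv_term _ _ _

lemma scalar_identity (d i : ℕ) (hi : i ≤ d + 1) :
    ((d : ℚ) + 1) * (ec (d + 1) (i + 1) * ((i : ℚ) + 1))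
      = ((d : ℚ) + 2) * (((d : ℚ) + 1) * ec d i + ec d (i + 1) * ((i : ℚ) + 1)) := by
  have hrec := Pcoef_rec d i hi
  have hfi : ((Nat.factorial i : ℕ) : ℚ) ≠ 0 := by
    exact_mod_cast Nat.factorial_ne_zero i
  have hfi1 : ((Nat.factorial (i + 1) : ℕ) : ℚ) ≠ 0 := by
    exact_mod_cast Nat.factorial_ne_zero (i + 1)
  set K : ℚ := ((Nat.factorial (d + 1) : ℕ) : ℚ) / ((Nat.factorial i : ℕ) : ℚ) with hK
  have h1 : ec (d + 1) (i + 1) * ((i : ℚ) + 1) = ((d : ℚ) + 2) * Pcoef (d + 2) (i + 1) * K := by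
    rw [ec, Nat.factorial_succ (d + 1), Nat.factorial_succ i, hK]
    push_cast
    field_simp
    ring
  have h2 : ec d (i + 1) * ((i : ℚ) + 1) = Pcoef (d + 1) (i + 1) * K := by
    rw [ec, Nat.factorial_succ i, hK]
    push_cast
    field_simp
  have h3 : ec d i = Pcoef (d + 1) i * K := by rw [ec, hK]
  rw [h1, h2, h3]
  linear_combination (((d : ℚ) + 2) * K) * hrec

lemma Erec (d : ℕ) :
    ((d : ℚ) + 1) • Polynomial.derivative (Epoly (d + 1))
      = ((d : ℚ) + 2) • (((d : ℚ) + 1) • Epoly d + tauQ * Polynomial.derivative (Epoly d)) := by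
  have hL : ((d : ℚ) + 1) • Polynomial.derivative (Epoly (d + 1))
      = ∑ i ∈ Finset.range (d + 2),
          (((d : ℚ) + 1) * (ec (d + 1) (i + 1) * ((i : ℚ) + 1))) • (tauQ ^ (d + 1 - i) * uQ ^ i) := by
    rw [dEpoly, Finset.smul_sum, Finset.sum_range_succ']
    simp only [Nat.cast_zero, mul_zero, zero_smul, smul_zero, add_zero,
      Nat.succ_sub_succ_eq_sub, Nat.succ_sub_one, Nat.cast_add, Nat.cast_one]
    exact Finset.sum_congr rfl fun i _ => smul_smul _ _ _
  have hR : ((d : ℚ) + 2) • (((d : ℚ) + 1) • Epoly d + tauQ * Polynomial.derivative (Epoly d))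
      = ∑ i ∈ Finset.range (d + 2),
          (((d : ℚ) + 2) * (((d : ℚ) + 1) * ec d i + ec d (i + 1) * ((i : ℚ) + 1)))
            • (tauQ ^ (d + 1 - i) * uQ ^ i) := by
    rw [dEpoly, Epoly, Finset.smul_sum, Finset.mul_sum]
    have hτ : ∀ j ∈ Finset.range (d + 2),
        tauQ * ((ec d j * (j : ℚ)) • (tauQ ^ (d + 1 - j) * uQ ^ (j - 1)))
          = (ec d j * (j : ℚ)) • (tauQ ^ (d + 2 - j) * uQ ^ (j - 1)) := by
      intro j hj
      rw [Finset.mem_range] at hj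
      rw [mul_smul_comm]
      congr 1
      rw [← mul_assoc, ← pow_succ']
      congr 2
      omega
    rw [Finset.sum_congr rfl hτ]
    have hshift : ∑ j ∈ Finset.range (d + 2),
          (ec d j * (j : ℚ)) • (tauQ ^ (d + 2 - j) * uQ ^ (j - 1))
        = ∑ i ∈ Finset.range (d + 2),
            (ec d (i + 1) * ((i : ℚ) + 1)) • (tauQ ^ (d + 1 - i) * uQ ^ i) := by
      rw [Finset.sum_range_succ']
      simp only [Nat.cast_zero, mul_zero, zero_smul, add_zero,
        Nat.succ_sub_succ_eq_sub, Nat.succ_sub_one, Nat.cast_add, Nat.cast_one]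
      rw [Finset.sum_range_succ
        (fun i => (ec d (i + 1) * ((i : ℚ) + 1)) • (tauQ ^ (d + 1 - i) * uQ ^ i)) (d + 1)]
      have hzero : ec d (d + 2) = 0 := by
        rw [ec, Pcoef_high (by omega) (by omega), zero_mul]
      rw [hzero]
      simp
    rw [hshift, ← Finset.sum_add_distrib, Finset.smul_sum]
    apply Finset.sum_congr rfl
    intro i _
    rw [smul_smul, ← add_smul, smul_smul]
  rw [hL, hR]
  apply Finset.sum_congr rfl
  intro i hi
  rw [Finset.mem_range] at hi
  rw [scalar_identity d i (by omega)]

lemma Ecoeff0 (d : ℕ) : (Epoly d).coeff 0 = 0 := by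
  rw [Epoly, Polynomial.finset_sum_coeff]
  apply Finset.sum_eq_zero
  intro j hj
  rcases j with _ | i
  · rw [ec, Pcoef_zero, zero_mul, zero_smul, Polynomial.coeff_zero]
  · rw [Polynomial.coeff_smul, Polynomial.mul_coeff_zero, uQ, Polynomial.coeff_X_pow]
    simp

lemma Ebase : Epoly 0 = uQ := by
  rw [Epoly]
  rw [Finset.sum_range_succ, Finset.sum_range_one]
  rw [ec, ec, Pcoef_zero, zero_mul, zero_smul, zero_add]
  have h1 : Pcoef 1 1 = 1 := by
    rw [Pcoef, Ppoly]
    have he : Finset.Icc 1 (1 - 1) = (∅ : Finset ℕ) := by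
      rw [Nat.sub_self]
      exact Finset.Icc_eq_empty_of_lt (by norm_num)
    rw [he, Finset.prod_empty, mul_one, Polynomial.coeff_X_one, Nat.sub_self,
      Polynomial.coeff_one_zero]
  rw [h1]
  norm_num [Nat.factorial]

/-! ### Assembling the induction -/

lemma poly_eq_of_deriv (p q : Q2) (h1 : Polynomial.derivative p = Polynomial.derivative q)
    (h2 : p.coeff 0 = q.coeff 0) : p = q := by
  have h3 : Polynomial.derivative (p - q) = 0 := by rw [map_sub, h1, sub_self]
  have h4 := Polynomial.eq_C_of_derivative_eq_zero h3
  rw [Polynomial.coeff_sub, h2, sub_self, map_zero] at h4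
  exact sub_eq_zero.mp h4

lemma coeff_one_S {S : PowerSeries Q2} (hS : IsILWSymbol S) :
    PowerSeries.coeff (R := Q2) 1 S = uQ := by
  conv_lhs => rw [hS.2]
  rw [map_add, PowerSeries.coeff_one]
  simp only [one_ne_zero, if_false, zero_add]
  rw [show (1 : ℕ) = 0 + 1 from rfl, PowerSeries.coeff_succ_X_mul, map_add,
    PowerSeries.coeff_zero_C, PowerSeries.coeff_C_mul]
  have hlog : PowerSeries.coeff (R := Q2) 0 (logPS S) = 0 := by
    simp [logPS]
  rw [hlog, mul_zero, add_zero]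

lemma Acoeff0 {S : PowerSeries Q2} (hS : IsILWSymbol S) (d : ℕ) :
    (Acoef S d).coeff 0 = 0 := by
  have h1 : eta (Acoef S d) = 0 := by
    rw [Acoef, ← PowerSeries.coeff_map, map_pow, mapS_eq_one hS, one_pow,
      PowerSeries.coeff_one]
    simp
  rw [eta_coeff_zero] at h1
  exact Polynomial.C_eq_zero.mp h1

lemma A_eq_E {S : PowerSeries Q2} (hS : IsILWSymbol S) : ∀ d : ℕ, Acoef S d = Epoly d := by
  intro d
  induction d with
  | zero =>
      rw [Acoef, pow_one, coeff_one_S hS, Ebase]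
  | succ d ih =>
      have h1 := Arec hS d
      have h2 := Erec d
      rw [ih] at h1
      have h3 : ((d : ℚ) + 1) • Polynomial.derivative (Acoef S (d + 1))
          = ((d : ℚ) + 1) • Polynomial.derivative (Epoly (d + 1)) := by rw [h1, h2]
      have hne : ((d : ℚ) + 1) ≠ 0 := by positivity
      have h4 : Polynomial.derivative (Acoef S (d + 1)) = Polynomial.derivative (Epoly (d + 1)) :=
        smul_right_injective Q2 hne h3
      exact poly_eq_of_deriv _ _ h4 (by rw [Acoeff0 hS (d + 1), Ecoeff0])

end ILWAux

/-- For every `d ≥ 0` the closed formula holds in `ℚ[u,τ]`: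
`[t^{d+1}]S^{d+1}/(d+1)! = Σ_{j=0}^{d} P_{d+1,j+1} τ^{d−j} u^{j+1}/(j+1)!`. -/
theorem ilw_stmt14 (S : PowerSeries Q2) (hS : IsILWSymbol S) (d : ℕ) :
    (Nat.factorial (d + 1) : ℚ)⁻¹ • PowerSeries.coeff (R := Q2) (d + 1) (S ^ (d + 1))
      = ∑ j ∈ Finset.range (d + 1),
          Pcoef (d + 1) (j + 1) •
            (tauQ ^ (d - j) * ((Nat.factorial (j + 1) : ℚ)⁻¹ • uQ ^ (j + 1))) := by
  have hAE := ILWAux.A_eq_E hS d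
  rw [ILWAux.Acoef] at hAE
  rw [hAE, ILWAux.Epoly, Finset.sum_range_succ']
  have h0 : ILWAux.ec d 0 • (tauQ ^ (d + 1 - 0) * uQ ^ 0) = 0 := by
    rw [ILWAux.ec, ILWAux.Pcoef_zero, zero_mul, zero_smul]
  rw [h0, add_zero, Finset.smul_sum]
  apply Finset.sum_congr rfl
  intro j hj
  rw [Finset.mem_range] at hj
  have hexp : d + 1 - (j + 1) = d - j := by omega
  rw [hexp]
  have hfj : ((Nat.factorial (j + 1) : ℕ) : ℚ) ≠ 0 := by
    exact_mod_cast Nat.factorial_ne_zero (j + 1)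
  have hfd : ((Nat.factorial (d + 1) : ℕ) : ℚ) ≠ 0 := by
    exact_mod_cast Nat.factorial_ne_zero (d + 1)
  rw [mul_smul_comm, smul_smul, smul_smul]
  congr 1
  rw [ILWAux.ec]
  field_simp
end
end
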